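/- Let U_1, …, U_m be nonempty closed convex polyhedra in ℝ^d with ⋂_{j=1}^m U_j = ∅. Then there exists ε > 0 such that ⋂_{j=1}^m B(U_j, ε) = ∅. -/

import Mathlib

open Finset

variable {H : Type*} [NormedAddCommGroup H] [InnerProductSpace ℝ H] [FiniteDimensional ℝ H]

/-- The cone generated by finitely many vectors. -/
def coneOf {n : ℕ} (v : Fin n → H) : Set H :=
  {x | ∃ l : Fin n → ℝ, (∀ i, 0 ≤ l i) ∧ ∑ i, l i • v i = x}

theorem isClosed_coneOf : ∀ {n : ℕ} (v : Fin n → H), IsClosed (coneOf v) := by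
  intro n
  induction n with
  | zero =>
    intro v
    have : coneOf v = {0} := by
      ext x
      simp only [coneOf, Set.mem_setOf_eq, Set.mem_singleton_iff]
      constructor
      · rintro ⟨l, -, hl⟩; simpa using hl.symm
      · rintro rfl; exact ⟨0, fun i => le_refl 0, by simp⟩
    rw [this]; exact isClosed_singleton
  | succ n ih =>
    intro v
    by_cases hli : LinearIndependent ℝ v
    · -- linearly independent: cone is image of closed orthant under closed embedding
      let T : (Fin (n+1) → ℝ) →ₗ[ℝ] H :=
        { toFun := fun l => ∑ i, l i • v i
          map_add' := by intro x y; simp [add_smul, Finset.sum_add_distrib]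
          map_smul' := by intro c x; simp [smul_smul, Finset.smul_sum] }
      have hinj : Function.Injective T := by
        rw [← LinearMap.ker_eq_bot, LinearMap.ker_eq_bot']
        intro l hl
        have := (Fintype.linearIndependent_iff.mp hli) l hl
        funext i; exact this i
      have hemb := T.isClosedEmbedding_of_injective (LinearMap.ker_eq_bot.mpr hinj)
      have horth : IsClosed {l : Fin (n+1) → ℝ | ∀ i, 0 ≤ l i} := by
        have : {l : Fin (n+1) → ℝ | ∀ i, 0 ≤ l i} = ⋂ i, {l | 0 ≤ l i} := by
          ext l; simp
        rw [this]
        exact isClosed_iInter fun i => isClosed_le continuous_const (continuous_apply i)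
      have : coneOf v = T '' {l | ∀ i, 0 ≤ l i} := by
        ext x
        simp only [coneOf, Set.mem_setOf_eq, Set.mem_image]
        exact ⟨fun ⟨l, h1, h2⟩ => ⟨l, h1, h2⟩, fun ⟨l, h1, h2⟩ => ⟨l, h1, h2⟩⟩
      rw [this]
      exact hemb.isClosedMap _ horth
    · -- dependent: the cone is a finite union of cones on fewer generators
      obtain ⟨c, hc0, i₀, hi₀⟩ := Fintype.not_linearIndependent_iff.mp hli
      -- WLOG some coefficient is positive
      have key : ∀ c : Fin (n+1) → ℝ, ∑ i, c i • v i = 0 → (∃ i, 0 < c i) →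
          coneOf v ⊆ ⋃ i ∈ {i | 0 < c i}, coneOf (v ∘ i.succAbove) := by
        intro c hcsum hcpos
        rintro x ⟨l, hl0, hlsum⟩
        -- minimize l i / c i over positive c i
        obtain ⟨j₀, hj₀mem, hj₀min⟩ :=
          Finset.exists_min_image (Finset.univ.filter fun i => 0 < c i)
            (fun i => l i / c i) (by
              obtain ⟨i, hi⟩ := hcpos
              exact ⟨i, Finset.mem_filter.mpr ⟨Finset.mem_univ i, hi⟩⟩)
        rw [Finset.mem_filter] at hj₀mem
        have hcj₀ : 0 < c j₀ := hj₀mem.2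
        set t : ℝ := l j₀ / c j₀ with ht
        have ht0 : 0 ≤ t := div_nonneg (hl0 j₀) hcj₀.le
        set l' : Fin (n+1) → ℝ := fun i => l i - t * c i with hl'
        have hl'0 : ∀ i, 0 ≤ l' i := by
          intro i
          by_cases hci : 0 < c i
          · have h1 := hj₀min i (Finset.mem_filter.mpr ⟨Finset.mem_univ i, hci⟩)
            have h2 : t * c i ≤ l i := by
              have := (le_div_iff₀ hci).mp h1
              linarith
            simp only [hl']
            linarith
          · push_neg at hci
            have : t * c i ≤ 0 := mul_nonpos_of_nonneg_of_nonpos ht0 hci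
            simp only [hl']
            linarith [hl0 i]
        have hl'j₀ : l' j₀ = 0 := by
          simp [hl', ht, div_mul_cancel₀ _ hcj₀.ne']
        have hl'sum : ∑ i, l' i • v i = x := by
          simp only [hl', sub_smul, Finset.sum_sub_distrib, hlsum, mul_smul]
          rw [← Finset.smul_sum, hcsum, smul_zero, sub_zero]
        refine Set.mem_biUnion (show j₀ ∈ {i | 0 < c i} from hcj₀) ?_
        refine ⟨fun k => l' (j₀.succAbove k), fun k => hl'0 _, ?_⟩
        have hdecomp := Fin.sum_univ_succAbove (fun i => l' i • v i) j₀
        rw [hdecomp, hl'j₀, zero_smul, zero_add] at hl'sum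
        exact hl'sum
      -- arrange a positive coefficient
      have hcpos : ∃ c : Fin (n+1) → ℝ, ∑ i, c i • v i = 0 ∧ ∃ i, 0 < c i := by
        rcases lt_or_gt_of_ne hi₀ with hneg | hpos
        · exact ⟨-c, by simp [hc0], i₀, by simpa using hneg⟩
        · exact ⟨c, hc0, i₀, hpos⟩
      obtain ⟨c', hc'sum, hc'pos⟩ := hcpos
      have hsub : coneOf v = ⋃ i ∈ {i | 0 < c' i}, coneOf (v ∘ i.succAbove) := by
        apply Set.Subset.antisymm (key c' hc'sum hc'pos)
        rintro x hx
        rw [Set.mem_iUnion₂] at hx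
        obtain ⟨i, -, l, hl0, hlsum⟩ := hx
        refine ⟨i.insertNth 0 l, ?_, ?_⟩
        · intro j
          by_cases hji : j = i
          · subst hji; simp [Fin.insertNth_apply_same]
          · obtain ⟨k, rfl⟩ := Fin.exists_succAbove_eq hji
            simpa [Fin.insertNth_apply_succAbove] using hl0 k
        · rw [Fin.sum_univ_succAbove (fun j => (i.insertNth 0 l : Fin (n+1) → ℝ) j • v j) i]
          simp only [Fin.insertNth_apply_same, Fin.insertNth_apply_succAbove, zero_smul, zero_add]
          exact hlsum
      rw [hsub]
      exact Set.Finite.isClosed_biUnion (Set.toFinite _) fun i _ => ih (v ∘ i.succAbove)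


open scoped InnerProductSpace

theorem mem_coneOf_self {n : ℕ} (v : Fin n → H) (i : Fin n) : v i ∈ coneOf v := by
  refine ⟨Pi.single i 1, ?_, ?_⟩
  · intro j
    rcases eq_or_ne j i with rfl | hji
    · simp
    · simp [Pi.single_apply, hji]
  · simp [Pi.single_apply, ite_smul]

theorem coneOf_smul_mem {n : ℕ} (v : Fin n → H) {c : ℝ} (hc : 0 < c) {x : H}
    (hx : x ∈ coneOf v) : c • x ∈ coneOf v := by
  obtain ⟨l, hl0, hlsum⟩ := hx
  refine ⟨fun i => c * l i, fun i => mul_nonneg hc.le (hl0 i), ?_⟩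
  rw [← hlsum, Finset.smul_sum]
  simp [smul_smul]

theorem coneOf_add_mem {n : ℕ} (v : Fin n → H) {x y : H}
    (hx : x ∈ coneOf v) (hy : y ∈ coneOf v) : x + y ∈ coneOf v := by
  obtain ⟨l, hl0, hlsum⟩ := hx
  obtain ⟨l', hl'0, hl'sum⟩ := hy
  refine ⟨l + l', fun i => add_nonneg (hl0 i) (hl'0 i), ?_⟩
  simp [add_smul, Finset.sum_add_distrib, hlsum, hl'sum]

/-- **Farkas' lemma**: if the system `⟪a i, x⟫ ≤ b i` is infeasible, there is a nonnegative
combination of the inequalities giving a contradiction. -/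
theorem farkas_fin {n : ℕ} (a : Fin n → H) (b : Fin n → ℝ)
    (h : ∀ x : H, ∃ i, b i < ⟪a i, x⟫_ℝ) :
    ∃ l : Fin n → ℝ, (∀ i, 0 ≤ l i) ∧ ∑ i, l i • a i = 0 ∧ ∑ i, l i * b i < 0 := by
  classical
  set H' := WithLp 2 (H × ℝ) with hH'
  haveI : FiniteDimensional ℝ H' := (WithLp.linearEquiv 2 ℝ (H × ℝ)).symm.finiteDimensional
  set e := (WithLp.equiv 2 (H × ℝ)).symm with he
  set w : Fin (n+1) → H' := Fin.snoc (fun i => e (a i, b i)) (e (0, 1)) with hw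
  -- coordinate projections as linear maps
  set P1 : H' →ₗ[ℝ] H := (LinearMap.fst ℝ H ℝ) ∘ₗ (WithLp.linearEquiv 2 ℝ (H × ℝ)).toLinearMap
    with hP1
  set P2 : H' →ₗ[ℝ] ℝ := (LinearMap.snd ℝ H ℝ) ∘ₗ (WithLp.linearEquiv 2 ℝ (H × ℝ)).toLinearMap
    with hP2
  have hP1e : ∀ uv : H × ℝ, P1 (e uv) = uv.1 := fun _ => rfl
  have hP2e : ∀ uv : H × ℝ, P2 (e uv) = uv.2 := fun _ => rfl
  by_cases hmem : e (0, -1) ∈ coneOf w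
  · obtain ⟨l, hl0, hlsum⟩ := hmem
    refine ⟨fun i => l i.castSucc, fun i => hl0 _, ?_, ?_⟩
    · have := congrArg P1 hlsum
      rw [map_sum] at this
      simp only [map_smul] at this
      rw [Fin.sum_univ_castSucc] at this
      simp only [hw, Fin.snoc_castSucc, Fin.snoc_last, hP1e, hP2e] at this
      simpa using this
    · have := congrArg P2 hlsum
      rw [map_sum] at this
      simp only [map_smul] at this
      rw [Fin.sum_univ_castSucc] at this
      simp only [hw, Fin.snoc_castSucc, Fin.snoc_last, hP1e, hP2e] at this
      simp only [smul_eq_mul, mul_one] at this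
      have h2 : ∑ i : Fin n, l i.castSucc * b i = -1 - l (Fin.last n) := by linarith
      rw [h2]
      have := hl0 (Fin.last n)
      linarith
  · exfalso
    set K : ConvexCone ℝ H' :=
      { carrier := coneOf w
        smul_mem' := fun c hc x hx => coneOf_smul_mem w hc hx
        add_mem' := fun x hx y hy => coneOf_add_mem w hx hy } with hK
    have hKne : (K : Set H').Nonempty := ⟨0, ⟨0, fun i => le_refl 0, by simp⟩⟩
    have hKclosed : IsClosed (K : Set H') := isClosed_coneOf w
    obtain ⟨y, hy1, hy2⟩ :=
      ProperCone.hyperplane_separation' (E := H')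
        ({ carrier := coneOf w
           add_mem' := fun hx hy => coneOf_add_mem w hx hy
           zero_mem' := ⟨0, fun i => le_refl 0, by simp⟩
           smul_mem' := fun c x hx => by
             rcases eq_or_lt_of_le c.2 with h | h
             · have hc : c = 0 := by ext; exact h.symm
               rw [hc, zero_smul]; exact ⟨0, fun i => le_refl 0, by simp⟩
             · show (c : ℝ) • x ∈ coneOf w
               exact coneOf_smul_mem w h hx
           isClosed' := hKclosed } : ProperCone ℝ H') hmem
    -- `t := y.snd > 0`
    have ht : 0 < P2 y := by
      have : ⟪y, e (0, -1)⟫_ℝ = -(P2 y) := by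
        rw [WithLp.prod_inner_apply]
        have h1 : (e ((0 : H), (-1 : ℝ))).ofLp.1 = (0 : H) := rfl
        have h2 : (e ((0 : H), (-1 : ℝ))).ofLp.2 = (-1 : ℝ) := rfl
        rw [h1, h2, inner_zero_right]
        simp only [RCLike.inner_apply, starRingEnd_apply, star_trivial]
        have h3 : (y.ofLp.2 : ℝ) = P2 y := rfl
        rw [h3]; ring
      rw [real_inner_comm, this] at hy2
      linarith
    -- the point `(-t⁻¹) • y.fst` satisfies all inequalities
    obtain ⟨i, hi⟩ := h ((-(P2 y)⁻¹) • P1 y)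
    have hgen : 0 ≤ ⟪w i.castSucc, y⟫_ℝ := hy1 _ (mem_coneOf_self w i.castSucc)
    have hgen' : 0 ≤ ⟪a i, P1 y⟫_ℝ + b i * P2 y := by
      have hwc : w i.castSucc = e (a i, b i) := by simp [hw]
      rw [hwc, WithLp.prod_inner_apply] at hgen
      have h1 : ((e (a i, b i)) : WithLp 2 (H × ℝ)).ofLp.1 = a i := rfl
      have h2 : ((e (a i, b i)) : WithLp 2 (H × ℝ)).ofLp.2 = b i := rfl
      rw [h1, h2] at hgen
      simp only [RCLike.inner_apply, starRingEnd_apply, star_trivial] at hgen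
      have h3 : (y.ofLp.1 : H) = P1 y := rfl
      have h4 : (y.ofLp.2 : ℝ) = P2 y := rfl
      rw [h3, h4] at hgen
      linarith [hgen]
    rw [real_inner_smul_right] at hi
    have h3 : -(P2 y)⁻¹ * ⟪a i, P1 y⟫_ℝ ≤ b i := by
      rw [neg_mul, neg_le]
      rw [← mul_le_mul_iff_of_pos_left ht]
      have hne : (P2 y) ≠ 0 := ht.ne'
      field_simp
      nlinarith
    linarith

/-- A (closed convex) polyhedron in Euclidean space `ℝ^d`: an intersection of finitely many
closed halfspaces `{x : ⟨a, x⟩ ≤ b}`. -/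
def IsEuclideanPolyhedron {d : ℕ} (S : Set (EuclideanSpace ℝ (Fin d))) : Prop :=
  ∃ (m : ℕ) (a : Fin m → EuclideanSpace ℝ (Fin d)) (b : Fin m → ℝ),
    S = {x | ∀ i, ∑ j, a i j * x j ≤ b i}

/-- For nonempty closed convex polyhedra `U₁, …, U_m` with empty
intersection, some `ε > 0` makes the intersection of the `ε`-thickenings empty. -/
theorem thickened_intersection_empty_of_empty_intersection
    {d m : ℕ} (U : Fin m → Set (EuclideanSpace ℝ (Fin d)))
    (hpoly : ∀ j, IsEuclideanPolyhedron (U j)) (hUne : ∀ j, (U j).Nonempty)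
    (hempty : (⋂ j, U j) = ∅) :
    ∃ ε > 0, (⋂ j, Metric.thickening ε (U j)) = ∅ := by
  classical
  -- inner products compute the linear forms
  have hinner : ∀ aa x : EuclideanSpace ℝ (Fin d), ⟪aa, x⟫_ℝ = ∑ k, aa k * x k := by
    intro aa x
    rw [PiLp.inner_apply]
    simp [RCLike.inner_apply, starRingEnd_apply, mul_comm]
  choose M A B hAB using hpoly
  -- combined index type
  set ι := (j : Fin m) × Fin (M j) with hι
  set N := Fintype.card ι with hN
  set eqv : ι ≃ Fin N := Fintype.equivFin ι with heqv
  set a : Fin N → EuclideanSpace ℝ (Fin d) := fun p => A (eqv.symm p).1 (eqv.symm p).2 with ha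
  set b : Fin N → ℝ := fun p => B (eqv.symm p).1 (eqv.symm p).2 with hb
  -- the combined system is infeasible
  have hinfeas : ∀ x : EuclideanSpace ℝ (Fin d), ∃ p : Fin N, b p < ⟪a p, x⟫_ℝ := by
    intro x
    have hx : x ∉ ⋂ j, U j := by rw [hempty]; exact Set.notMem_empty x
    rw [Set.mem_iInter] at hx
    push_neg at hx
    obtain ⟨j, hj⟩ := hx
    rw [hAB j, Set.mem_setOf_eq] at hj
    push_neg at hj
    obtain ⟨i, hi⟩ := hj
    refine ⟨eqv ⟨j, i⟩, ?_⟩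
    rw [hinner]
    have he2 : eqv.symm (eqv ⟨j, i⟩) = ⟨j, i⟩ := Equiv.symm_apply_apply _ _
    simp only [ha, hb]
    rw [he2]
    exact hi
  obtain ⟨l, hl0, hlsum, hlb⟩ := farkas_fin a b hinfeas
  -- choose ε
  set S : ℝ := ∑ p, l p * ‖a p‖ with hS
  have hS0 : 0 ≤ S := Finset.sum_nonneg fun p _ => mul_nonneg (hl0 p) (norm_nonneg _)
  set c : ℝ := -∑ p, l p * b p with hc
  have hc0 : 0 < c := by simp only [hc]; linarith
  refine ⟨c / (S + 1), div_pos hc0 (by linarith), ?_⟩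
  set ε : ℝ := c / (S + 1) with hε
  have hεS : ε * S < c := by
    rw [hε, div_mul_eq_mul_div, div_lt_iff₀ (by linarith : (0:ℝ) < S + 1)]
    nlinarith
  have hε0 : 0 < ε := div_pos hc0 (by linarith)
  rw [Set.eq_empty_iff_forall_notMem]
  intro x hx
  rw [Set.mem_iInter] at hx
  -- choose nearby points
  have hnear : ∀ j, ∃ u ∈ U j, dist x u < ε := fun j =>
    Metric.mem_thickening_iff.mp (hx j)
  choose u hu hud using hnear
  -- key estimate
  have hkey : ∀ p : Fin N, ⟪a p, x⟫_ℝ ≤ b p + ‖a p‖ * ε := by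
    intro p
    set j := (eqv.symm p).1
    set i := (eqv.symm p).2
    have hin : ⟪a p, u j⟫_ℝ ≤ b p := by
      have := hu j
      rw [hAB j, Set.mem_setOf_eq] at this
      rw [hinner]
      exact this i
    have hcs : ⟪a p, x - u j⟫_ℝ ≤ ‖a p‖ * ‖x - u j‖ := real_inner_le_norm _ _
    have hnd : ‖x - u j‖ < ε := by rw [← dist_eq_norm]; exact hud j
    have : ⟪a p, x⟫_ℝ = ⟪a p, u j⟫_ℝ + ⟪a p, x - u j⟫_ℝ := by
      rw [inner_sub_right]; ring
    rw [this]
    have h2 : ‖a p‖ * ‖x - u j‖ ≤ ‖a p‖ * ε :=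
      mul_le_mul_of_nonneg_left hnd.le (norm_nonneg _)
    linarith
  -- contradiction
  have hzero : (0:ℝ) = ∑ p, l p * ⟪a p, x⟫_ℝ := by
    have : ⟪∑ p, l p • a p, x⟫_ℝ = ∑ p, l p * ⟪a p, x⟫_ℝ := by
      rw [sum_inner]
      exact Finset.sum_congr rfl fun p _ => real_inner_smul_left _ _ _
    rw [← this, hlsum, inner_zero_left]
  have hle : ∑ p, l p * ⟪a p, x⟫_ℝ ≤ ∑ p, l p * (b p + ‖a p‖ * ε) :=
    Finset.sum_le_sum fun p _ => mul_le_mul_of_nonneg_left (hkey p) (hl0 p)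
  have hsplit : ∑ p, l p * (b p + ‖a p‖ * ε) = (∑ p, l p * b p) + ε * S := by
    rw [hS, Finset.mul_sum, ← Finset.sum_add_distrib]
    exact Finset.sum_congr rfl fun p _ => by ring
  rw [hsplit] at hle
  have : (0:ℝ) < 0 := by
    calc (0:ℝ) = ∑ p, l p * ⟪a p, x⟫_ℝ := hzero
      _ ≤ (∑ p, l p * b p) + ε * S := hle
      _ < (∑ p, l p * b p) + c := by linarith
      _ = 0 := by rw [hc]; ring
  exact absurd this (lt_irrefl 0)
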